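/- There exists a compact subset K of the plane such that the Assouad dimension of the visible part Visᵉ K equals 2 for almost every direction e ∈ S¹. Concretely, K = A × A with A = {0} ∪ {S_n⁻¹}, S_n the n-th harmonic number, works: Visᵉ K = K off a countable set of directions and dim_A K = 2. -/

import Mathlib

open Real MeasureTheory

/-- The `n`-th harmonic number. -/
noncomputable def harm (n : ℕ) : ℝ := ∑ k ∈ Finset.Icc 1 n, (1 : ℝ) / k

/-- `A = {0} ∪ {S_n⁻¹ : n ≥ 1}`. -/
noncomputable def harmSet : Set ℝ := {0} ∪ {x : ℝ | ∃ n : ℕ, 1 ≤ n ∧ x = (harm n)⁻¹}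

/-- The visible part of `K` in direction `e`. -/
def visiblePart (K : Set (ℝ × ℝ)) (e : ℝ × ℝ) : Set (ℝ × ℝ) :=
  {x | {y : ℝ × ℝ | ∃ t : ℝ, 0 ≤ t ∧ y = x + t • e} ∩ K = {x}}

/-- The Assouad dimension of a set `X` in a metric space: the infimum of exponents `s`
for which there is a constant `C` such that every ball `B(x, R) ∩ X` can be covered by
at most `C (R/r)^s` balls of radius `r`, for all `0 < r < R`. -/
noncomputable def assouadDim {α : Type*} [PseudoMetricSpace α] (X : Set α) : ℝ :=
  sInf {s : ℝ | ∃ C : ℝ, 0 < C ∧ ∀ x ∈ X, ∀ r R : ℝ, 0 < r → r < R →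
    ∃ F : Finset α, (X ∩ Metric.ball x R ⊆ ⋃ y ∈ F, Metric.ball y r) ∧
      (F.card : ℝ) ≤ C * (R / r) ^ s}

lemma harm_zero : harm 0 = 0 := by simp [harm]

lemma harm_succ (n : ℕ) : harm (n + 1) = harm n + 1 / (n + 1) := by
  rw [harm, Finset.sum_Icc_succ_top (by omega)]
  push_cast [harm]; ring

lemma harm_strictMono : StrictMono harm := by
  apply strictMono_nat_of_lt_succ
  intro n
  rw [harm_succ]
  have : (0:ℝ) < 1 / (n + 1) := by positivity
  linarith

lemma harm_mono : Monotone harm := harm_strictMono.monotone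

lemma one_le_harm {n : ℕ} (h : 1 ≤ n) : 1 ≤ harm n := by
  calc (1:ℝ) = harm 1 := by norm_num [harm_succ 0, harm_zero]
  _ ≤ harm n := harm_mono h

lemma harm_pos {n : ℕ} (h : 1 ≤ n) : 0 < harm n := lt_of_lt_of_le one_pos (one_le_harm h)

lemma harm_add_le (n : ℕ) (hn : 1 ≤ n) : ∀ m : ℕ, harm (n + m) ≤ harm n + m / n := by
  intro m
  induction m with
  | zero => simp
  | succ m ih =>
    rw [show n + (m+1) = (n+m)+1 by ring, harm_succ]
    have h1 : (1:ℝ) / (↑(n + m) + 1) ≤ 1 / n := by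
      apply one_div_le_one_div_of_le (by exact_mod_cast hn)
      push_cast; linarith [Nat.cast_nonneg (α := ℝ) m]
    push_cast at ih h1 ⊢
    have he : ((m:ℝ)+1)/n = m/n + 1/n := by ring
    rw [he]
    linarith

lemma harm_two_mul_le {n : ℕ} (hn : 1 ≤ n) : harm (2 * n) ≤ harm n + 1 := by
  have := harm_add_le n hn n
  rw [show n + n = 2 * n by ring] at this
  have : harm (2*n) ≤ harm n + n / n := this
  rwa [div_self (by positivity : (n:ℝ) ≠ 0)] at this

lemma harm_two_mul_le' {n : ℕ} (hn : 1 ≤ n) : harm (2 * n) ≤ 2 * harm n := by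
  have h1 := harm_two_mul_le hn
  have h2 := one_le_harm hn
  linarith

lemma harm_eq_range (n : ℕ) : harm n = ∑ i ∈ Finset.range n, 1 / (i + 1 : ℝ) := by
  induction n with
  | zero => simp [harm_zero]
  | succ n ih => rw [harm_succ, Finset.sum_range_succ, ih]

lemma harm_tendsto : Filter.Tendsto harm Filter.atTop Filter.atTop := by
  have := Real.tendsto_sum_range_one_div_nat_succ_atTop
  apply this.congr
  intro n
  rw [harm_eq_range]


/-- inverse harmonic numbers are antitone on [1,∞). -/
lemma inv_harm_le {i j : ℕ} (hi : 1 ≤ i) (hij : i ≤ j) : (harm j)⁻¹ ≤ (harm i)⁻¹ :=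
  one_div_le_one_div_of_le (harm_pos hi) (harm_mono hij) |>.trans_eq (by rw [one_div]) |>.trans_eq' (by rw [one_div])

/-- gap lower bound -/
lemma gap_lower {n i j : ℕ} (hn : 1 ≤ n) (hni : n ≤ i) (hij : i < j) (hj : j ≤ 2 * n) :
    1 / (2 * n * harm (2 * n) ^ 2) ≤ (harm i)⁻¹ - (harm j)⁻¹ := by
  have hi1 : 1 ≤ i := le_trans hn hni
  have hipos := harm_pos hi1
  have hi1pos := harm_pos (le_trans hi1 (Nat.le_succ i))
  have h2n : (0:ℝ) < harm (2 * n) := harm_pos (by omega)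
  -- (harm i)⁻¹ - (harm (i+1))⁻¹ = (1/(i+1)) / (harm i * harm (i+1))
  have key : (harm i)⁻¹ - (harm (i+1))⁻¹ = (1 / (i+1)) / (harm i * harm (i+1)) := by
    rw [harm_succ]
    field_simp
    ring
  have h1 : (harm (i+1))⁻¹ - (harm j)⁻¹ ≥ 0 := by
    have := inv_harm_le (le_trans hi1 (Nat.le_succ i)) (by omega : i + 1 ≤ j)
    linarith
  have hle : 1 / (2 * n * harm (2 * n) ^ 2) ≤ (1 / (i+1)) / (harm i * harm (i+1)) := by
    rw [div_div]
    apply one_div_le_one_div_of_le (by positivity)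
    have a1 : harm i ≤ harm (2*n) := harm_mono (by omega)
    have a2 : harm (i+1) ≤ harm (2*n) := harm_mono (by omega)
    have hi2n : (i:ℝ) + 1 ≤ 2 * n := by exact_mod_cast (by omega : i + 1 ≤ 2 * n)
    calc (i+1 : ℝ) * (harm i * harm (i+1)) ≤ (2*n) * (harm (2*n) * harm (2*n)) := by
          apply mul_le_mul hi2n (mul_le_mul a1 a2 (le_of_lt hi1pos) (le_of_lt h2n)) (by positivity) (by positivity)
      _ = 2 * n * harm (2*n)^2 := by ring
  calc 1 / (2 * n * harm (2 * n) ^ 2) ≤ (1 / (i+1)) / (harm i * harm (i+1)) := hle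
    _ = (harm i)⁻¹ - (harm (i+1))⁻¹ := key.symm
    _ ≤ (harm i)⁻¹ - (harm j)⁻¹ := by linarith

/-- spread upper bound -/
lemma spread_upper {n m : ℕ} (hn : 1 ≤ n) (hnm : n ≤ m) (hm : m ≤ 2 * n) :
    (harm n)⁻¹ - (harm m)⁻¹ ≤ 1 / harm n ^ 2 := by
  have hnp := harm_pos hn
  have hmp := harm_pos (le_trans hn hnm)
  have h1 : (harm n)⁻¹ - (harm m)⁻¹ = (harm m - harm n) / (harm n * harm m) := by
    field_simp
  rw [h1, one_div]
  have h2 : harm m - harm n ≤ 1 := by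
    have := harm_two_mul_le hn
    have := harm_mono hm
    linarith
  have h3 : harm n ^ 2 ≤ harm n * harm m := by
    have := harm_mono hnm
    nlinarith
  calc (harm m - harm n) / (harm n * harm m) ≤ 1 / (harm n ^2) := by
        apply div_le_div₀ one_pos.le h2 (by positivity) h3
    _ = (harm n ^ 2)⁻¹ := one_div _

lemma inv_harm_mem {n : ℕ} (hn : 1 ≤ n) : (harm n)⁻¹ ∈ harmSet :=
  Or.inr ⟨n, hn, rfl⟩


lemma harmSet_eq : harmSet = insert 0 (Set.range fun m : ℕ => (harm (m + 1))⁻¹) := by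
  ext x
  constructor
  · rintro (h | ⟨n, hn, rfl⟩)
    · exact Or.inl h
    · exact Or.inr ⟨n - 1, by simp only []; rw [Nat.sub_add_cancel hn]⟩
  · rintro (h | ⟨m, rfl⟩)
    · exact Or.inl h
    · exact Or.inr ⟨m + 1, by omega, rfl⟩

lemma harmSet_compact : IsCompact harmSet := by
  rw [harmSet_eq]
  apply Filter.Tendsto.isCompact_insert_range
  have h1 : Filter.Tendsto (fun m : ℕ => harm (m + 1)) Filter.atTop Filter.atTop :=
    harm_tendsto.comp (Filter.tendsto_add_atTop_nat 1)
  exact h1.inv_tendsto_atTop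

lemma harmSet_countable : harmSet.Countable := by
  rw [harmSet_eq]
  exact (Set.countable_range _).insert 0

/-- Counting: points in a finset pairwise 2r-separated, each covered by a ball of F of radius r. -/
lemma card_le_of_sep_cover {α : Type*} [PseudoMetricSpace α] {P F : Finset α} {r : ℝ}
    (hsep : ∀ p ∈ P, ∀ q ∈ P, p ≠ q → 2 * r ≤ dist p q)
    (hcov : ∀ p ∈ P, ∃ c ∈ F, p ∈ Metric.ball c r) : P.card ≤ F.card := by
  classical
  have : ∀ p : α, p ∈ P → ∃ c : α, c ∈ F ∧ p ∈ Metric.ball c r := by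
    intro p hp; obtain ⟨c, hc, hc2⟩ := hcov p hp; exact ⟨c, hc, hc2⟩
  choose f hf1 hf2 using this
  let g : α → α := fun p => if h : p ∈ P then f p h else p
  apply Finset.card_le_card_of_injOn g
  · intro p hp; have hp' : p ∈ P := hp; simp only [g, dif_pos hp']; exact hf1 p hp'
  · intro p hp q hq hpq
    simp only [Finset.mem_coe] at hp hq
    simp only [g, dif_pos hp, dif_pos hq] at hpq
    by_contra hne
    have h1 := hf2 p hp
    have h2 := hf2 q hq
    rw [Metric.mem_ball] at h1 h2
    have := hsep p hp q hq hne
    have : dist p q < 2 * r := by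
      calc dist p q ≤ dist p (f p hp) + dist (f q hq) q := by
            rw [hpq]; exact dist_triangle_right p q (f q hq) |>.trans (by rw [dist_comm q (f q hq)])
        _ < r + r := by rw [dist_comm (f q hq) q] at *; exact add_lt_add h1 h2
        _ = 2 * r := by ring
    linarith


lemma floor_grid {r R z : ℝ} (hr : 0 < r) (hz : |z| < R) {M : ℤ} (hM : R / r ≤ M) :
    -M ≤ ⌊z / r⌋ ∧ (⌊z / r⌋:ℤ) < M ∧ |z - r * ⌊z / r⌋| < r := by
  rw [abs_lt] at hz
  have h1 : z / r < R / r := div_lt_div_of_pos_right hz.2 hr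
  have h2 : -(R / r) < z / r := by
    have := div_lt_div_of_pos_right hz.1 hr
    rw [neg_div] at this; linarith
  have hfl : (⌊z / r⌋ : ℝ) ≤ z / r := Int.floor_le _
  have hfu : z / r < ⌊z / r⌋ + 1 := Int.lt_floor_add_one _
  refine ⟨?_, ?_, ?_⟩
  · rw [Int.le_floor]; push_cast; linarith
  · have : (⌊z / r⌋ : ℝ) < M := by linarith
    exact_mod_cast this
  · rw [abs_lt]
    constructor
    · have := (le_div_iff₀ hr).mp hfl; nlinarith
    · have := (div_lt_iff₀ hr).mp hfu; nlinarith

lemma grid_cover (X : Set (ℝ × ℝ)) : ∀ x ∈ X, ∀ r R : ℝ, 0 < r → r < R →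
    ∃ F : Finset (ℝ × ℝ), (X ∩ Metric.ball x R ⊆ ⋃ y ∈ F, Metric.ball y r) ∧
      (F.card : ℝ) ≤ 36 * (R / r) ^ (2:ℝ) := by
  intro x _ r R hr hrR
  classical
  set M : ℤ := ⌈R / r⌉ with hMdef
  have hRr1 : 1 < R / r := (one_lt_div hr).mpr hrR
  have hMR : R / r ≤ (M:ℝ) := Int.le_ceil _
  have hM1 : (1:ℝ) ≤ (M:ℝ) := le_trans hRr1.le hMR
  have hMle : (M:ℝ) ≤ R / r + 1 := (Int.ceil_lt_add_one _).le
  refine ⟨((Finset.Icc (-M) M) ×ˢ (Finset.Icc (-M) M)).image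
    (fun ij : ℤ × ℤ => (x.1 + r * ij.1, x.2 + r * ij.2)), ?_, ?_⟩
  · rintro y ⟨-, hy⟩
    rw [Metric.mem_ball, Prod.dist_eq, sup_lt_iff, Real.dist_eq, Real.dist_eq] at hy
    obtain ⟨g1, g2, g3⟩ := floor_grid hr hy.1 hMR
    obtain ⟨h1, h2, h3⟩ := floor_grid hr hy.2 hMR
    simp only [Set.mem_iUnion, Finset.mem_coe, Finset.mem_image, Finset.mem_product,
      Finset.mem_Icc, Metric.mem_ball, exists_prop]
    refine ⟨(x.1 + r * ⌊(y.1 - x.1) / r⌋, x.2 + r * ⌊(y.2 - x.2) / r⌋),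
      ⟨⟨⌊(y.1 - x.1) / r⌋, ⌊(y.2 - x.2) / r⌋⟩, ⟨⟨g1, g2.le⟩, ⟨h1, h2.le⟩⟩, rfl⟩, ?_⟩
    rw [Prod.dist_eq, sup_lt_iff, Real.dist_eq, Real.dist_eq]
    constructor
    · simpa [sub_sub] using g3
    · simpa [sub_sub] using h3
  · have hc : ((Finset.Icc (-M) M).card : ℝ) = 2 * (M:ℝ) + 1 := by
      have hMint : (1:ℤ) ≤ M := by exact_mod_cast hM1
      rw [Int.card_Icc]
      have h0 : ((M + 1 - -M).toNat : ℤ) = M + 1 - -M := Int.toNat_of_nonneg (by omega)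
      have h1 : ((M + 1 - -M).toNat : ℝ) = ((M + 1 - -M : ℤ) : ℝ) := by exact_mod_cast h0
      rw [h1]; push_cast; ring
    calc (((Finset.Icc (-M) M) ×ˢ (Finset.Icc (-M) M)).image
        (fun ij : ℤ × ℤ => (x.1 + r * ij.1, x.2 + r * ij.2)) |>.card : ℝ)
        ≤ (((Finset.Icc (-M) M) ×ˢ (Finset.Icc (-M) M)).card : ℝ) := by
          exact_mod_cast Finset.card_image_le
      _ = (2 * (M:ℝ) + 1) ^ 2 := by rw [Finset.card_product]; push_cast [hc]; ring
      _ ≤ 36 * (R / r) ^ (2:ℝ) := by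
          rw [show ((2:ℝ)) = ((2:ℕ):ℝ) by norm_num, Real.rpow_natCast]
          nlinarith [hMle, hRr1]


set_option maxHeartbeats 1000000 in
lemma two_le_of_mem {s C : ℝ} (hC : 0 < C)
    (h : ∀ x ∈ harmSet ×ˢ harmSet, ∀ r R : ℝ, 0 < r → r < R →
      ∃ F : Finset (ℝ × ℝ), ((harmSet ×ˢ harmSet) ∩ Metric.ball x R ⊆ ⋃ y ∈ F, Metric.ball y r) ∧
        (F.card : ℝ) ≤ C * (R / r) ^ s) : 2 ≤ s := by
  by_contra hs
  push_neg at hs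
  set s' : ℝ := max s 0 with hs'def
  have hs'0 : 0 ≤ s' := le_max_right _ _
  have hs'2 : s' < 2 := max_lt hs (by norm_num)
  have hss' : s ≤ s' := le_max_left _ _
  -- choose n large
  obtain ⟨n, hn1, hnbig⟩ : ∃ n : ℕ, 1 ≤ n ∧ 1024 * C < (n:ℝ) ^ (2 - s') := by
    have ht : Filter.Tendsto (fun n : ℕ => ((n:ℝ) ^ (2 - s'))) Filter.atTop Filter.atTop :=
      (tendsto_rpow_atTop (by linarith)).comp tendsto_natCast_atTop_atTop
    have := (ht.eventually_gt_atTop (1024 * C)).and (Filter.eventually_ge_atTop 1)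
    obtain ⟨n, hn⟩ := this.exists
    exact ⟨n, hn.2, hn.1⟩
  have hnR : (1:ℝ) ≤ (n:ℝ) := by exact_mod_cast hn1
  set hsm : ℝ := harm n with hhsm
  set H : ℝ := harm (2 * n) with hH
  have hhp : 0 < hsm := harm_pos hn1
  have hHp : 0 < H := harm_pos (by omega)
  have hH2h : H ≤ 2 * hsm := harm_two_mul_le' hn1
  have h1h : 1 ≤ hsm := one_le_harm hn1
  have hhH : hsm ≤ H := harm_mono (by omega)
  have hHsq : H ^ 2 ≤ 4 * hsm ^ 2 := by nlinarith
  set r : ℝ := 1 / (4 * n * H ^ 2) with hrdef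
  set R : ℝ := 2 / hsm ^ 2 with hRdef
  have hr : 0 < r := by positivity
  have hrR : r < R := by
    rw [hrdef, hRdef]
    rw [div_lt_div_iff₀ (by positivity) (by positivity)]
    nlinarith
  have hx : ((harm n)⁻¹, (harm n)⁻¹) ∈ harmSet ×ˢ harmSet :=
    ⟨Or.inr ⟨n, hn1, rfl⟩, Or.inr ⟨n, hn1, rfl⟩⟩
  obtain ⟨F, hcov, hcard⟩ := h _ hx r R hr hrR
  -- the point cloud
  classical
  set P : Finset (ℝ × ℝ) := (Finset.Icc n (2*n) ×ˢ Finset.Icc n (2*n)).image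
    (fun ij : ℕ × ℕ => ((harm ij.1)⁻¹, (harm ij.2)⁻¹)) with hPdef
  have hainj : Set.InjOn (fun m : ℕ => (harm m)⁻¹) (Finset.Icc n (2*n)) := by
    intro a ha b hb hab
    simp only [Finset.coe_Icc, Set.mem_Icc] at ha hb
    have := inv_inj.mp hab
    exact harm_strictMono.injective this
  have hPcard : P.card = (n+1) * (n+1) := by
    rw [hPdef, Finset.card_image_of_injOn, Finset.card_product, Nat.card_Icc]
    · congr 1 <;> omega
    · intro a ha b hb hab
      simp only [Finset.mem_coe, Finset.mem_product] at ha hb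
      simp only [Prod.mk.injEq] at hab
      ext
      · exact hainj (by simpa using ha.1) (by simpa using hb.1) hab.1
      · exact hainj (by simpa using ha.2) (by simpa using hb.2) hab.2
  -- every point of P is in K ∩ ball x R
  have hmemP : ∀ p ∈ P, p ∈ (harmSet ×ˢ harmSet) ∩ Metric.ball ((harm n)⁻¹, (harm n)⁻¹) R := by
    intro p hp
    rw [hPdef, Finset.mem_image] at hp
    obtain ⟨⟨i, j⟩, hij, rfl⟩ := hp
    rw [Finset.mem_product, Finset.mem_Icc, Finset.mem_Icc] at hij
    have hi1 : 1 ≤ i := le_trans hn1 hij.1.1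
    have hj1 : 1 ≤ j := le_trans hn1 hij.2.1
    constructor
    · exact ⟨Or.inr ⟨i, hi1, rfl⟩, Or.inr ⟨j, hj1, rfl⟩⟩
    · rw [Metric.mem_ball, Prod.dist_eq, sup_lt_iff, Real.dist_eq, Real.dist_eq]
      have b1 : ∀ m : ℕ, n ≤ m → m ≤ 2*n → |(harm m)⁻¹ - (harm n)⁻¹| < R := by
        intro m hm1 hm2
        rw [abs_sub_comm, abs_of_nonneg (by linarith [inv_harm_le hn1 hm1])]
        have := spread_upper hn1 hm1 hm2
        rw [hRdef]
        have : (1:ℝ) / hsm ^ 2 < 2 / hsm ^ 2 := by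
          apply div_lt_div_of_pos_right one_lt_two (by positivity)
        calc (harm n)⁻¹ - (harm m)⁻¹ ≤ 1 / hsm ^ 2 := spread_upper hn1 hm1 hm2
          _ < 2 / hsm ^ 2 := this
      exact ⟨b1 i hij.1.1 hij.1.2, b1 j hij.2.1 hij.2.2⟩
  -- separation
  have hsep : ∀ p ∈ P, ∀ q ∈ P, p ≠ q → 2 * r ≤ dist p q := by
    intro p hp q hq hpq
    rw [hPdef, Finset.mem_image] at hp hq
    obtain ⟨⟨i, j⟩, hij, rfl⟩ := hp
    obtain ⟨⟨i', j'⟩, hij', rfl⟩ := hq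
    rw [Finset.mem_product, Finset.mem_Icc, Finset.mem_Icc] at hij hij'
    have h2r : 2 * r = 1 / (2 * n * H ^ 2) := by rw [hrdef]; ring
    have comp : ∀ a b : ℕ, n ≤ a → a ≤ 2*n → n ≤ b → b ≤ 2*n → a ≠ b →
        2 * r ≤ |(harm a)⁻¹ - (harm b)⁻¹| := by
      intro a b ha1 ha2 hb1 hb2 hab
      rw [h2r]
      rcases Nat.lt_or_ge a b with hl | hl
      · rw [abs_of_nonneg (by linarith [inv_harm_le (le_trans hn1 ha1) hl.le] :
          (0:ℝ) ≤ (harm a)⁻¹ - (harm b)⁻¹)]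
        exact gap_lower hn1 ha1 hl hb2
      · have hl' : b < a := by omega
        rw [abs_sub_comm, abs_of_nonneg (by linarith [inv_harm_le (le_trans hn1 hb1) hl'.le] :
          (0:ℝ) ≤ (harm b)⁻¹ - (harm a)⁻¹)]
        exact gap_lower hn1 hb1 hl' ha2
    rw [Prod.dist_eq, le_sup_iff, Real.dist_eq, Real.dist_eq]
    rcases Classical.em (i = i') with he | he
    · have hne : j ≠ j' := by
        intro hj; apply hpq; rw [he, hj]
      exact Or.inr (comp j j' hij.2.1 hij.2.2 hij'.2.1 hij'.2.2 hne)
    · exact Or.inl (comp i i' hij.1.1 hij.1.2 hij'.1.1 hij'.1.2 he)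
  -- covering gives injection
  have hcov' : ∀ p ∈ P, ∃ c ∈ F, p ∈ Metric.ball c r := by
    intro p hp
    have := hcov (hmemP p hp)
    simpa using this
  have hcount : P.card ≤ F.card := card_le_of_sep_cover hsep hcov'
  -- numeric contradiction
  have hRr : R / r = 8 * n * H ^ 2 / hsm ^ 2 := by
    rw [hRdef, hrdef]
    field_simp
    ring
  have hRrle : R / r ≤ 32 * n := by
    rw [hRr, div_le_iff₀ (by positivity)]
    nlinarith
  have hRr1 : 1 ≤ R / r := by
    rw [le_div_iff₀ hr]; linarith
  have key : ((n:ℝ)+1) * ((n:ℝ)+1) ≤ C * (32 * n) ^ s' := by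
    calc ((n:ℝ)+1) * ((n:ℝ)+1) = (P.card : ℝ) := by rw [hPcard]; push_cast; ring
      _ ≤ (F.card : ℝ) := by exact_mod_cast hcount
      _ ≤ C * (R / r) ^ s := hcard
      _ ≤ C * (R / r) ^ s' := by
          apply mul_le_mul_of_nonneg_left (Real.rpow_le_rpow_of_exponent_le hRr1 hss') hC.le
      _ ≤ C * (32 * n) ^ s' := by
          apply mul_le_mul_of_nonneg_left (Real.rpow_le_rpow (by linarith) hRrle hs'0) hC.le
  have hsplit : ((32:ℝ) * n) ^ s' ≤ 1024 * (n:ℝ) ^ s' := by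
    rw [Real.mul_rpow (by norm_num) (by positivity)]
    have : (32:ℝ) ^ s' ≤ 32 ^ (2:ℝ) := Real.rpow_le_rpow_of_exponent_le (by norm_num) hs'2.le
    have h32 : (32:ℝ) ^ (2:ℝ) = 1024 := by
      rw [show ((2:ℝ)) = ((2:ℕ):ℝ) by norm_num, Real.rpow_natCast]; norm_num
    apply mul_le_mul_of_nonneg_right _ (Real.rpow_nonneg (by positivity) _)
    linarith
  have hfin : ((n:ℝ)+1) * ((n:ℝ)+1) ≤ 1024 * C * (n:ℝ) ^ s' := by
    calc ((n:ℝ)+1) * ((n:ℝ)+1) ≤ C * (32 * n) ^ s' := key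
      _ ≤ C * (1024 * (n:ℝ) ^ s') := mul_le_mul_of_nonneg_left hsplit hC.le
      _ = 1024 * C * (n:ℝ) ^ s' := by ring
  -- but n^2 = n^{s'} * n^{2-s'} > n^{s'} * 1024 C
  have hnpos : (0:ℝ) < n := by linarith
  have hpow : (n:ℝ) ^ s' * (n:ℝ) ^ (2 - s') = (n:ℝ) * (n:ℝ) := by
    rw [← Real.rpow_add hnpos, show s' + (2 - s') = ((2:ℕ):ℝ) by push_cast; ring,
      Real.rpow_natCast]
    ring
  have hns' : (0:ℝ) < (n:ℝ) ^ s' := Real.rpow_pos_of_pos hnpos _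
  have : 1024 * C * (n:ℝ) ^ s' < (n:ℝ) * (n:ℝ) := by
    rw [← hpow]
    calc 1024 * C * (n:ℝ) ^ s' < (n:ℝ) ^ (2 - s') * (n:ℝ) ^ s' := by
          apply mul_lt_mul_of_pos_right hnbig hns' |>.trans_eq' (by ring)
      _ = (n:ℝ) ^ s' * (n:ℝ) ^ (2 - s') := by ring
  nlinarith


/-- normalized direction map -/
noncomputable def dirOf (p : (ℝ × ℝ) × (ℝ × ℝ)) : ℝ × ℝ :=
  (Real.sqrt ((p.2.1 - p.1.1) ^ 2 + (p.2.2 - p.1.2) ^ 2))⁻¹ • (p.2 - p.1)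

lemma bad_subset (K : Set (ℝ × ℝ)) :
    {e : ℝ × ℝ | e.1 ^ 2 + e.2 ^ 2 = 1 ∧ visiblePart K e ≠ K} ⊆ dirOf '' (K ×ˢ K) := by
  rintro e ⟨hunit, hne⟩
  -- visiblePart K e ⊆ K
  have hsub : visiblePart K e ⊆ K := by
    intro x hx
    have : x ∈ {y : ℝ × ℝ | ∃ t : ℝ, 0 ≤ t ∧ y = x + t • e} ∩ K := by
      rw [hx]; exact rfl
    exact this.2
  -- find x ∈ K not visible
  have : ¬ (K ⊆ visiblePart K e) := fun hK => hne (le_antisymm hsub hK)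
  rw [Set.not_subset] at this
  obtain ⟨x, hxK, hxv⟩ := this
  -- the ray intersection is not {x} but contains x
  rw [visiblePart, Set.mem_setOf_eq] at hxv
  have hxmem : x ∈ {y : ℝ × ℝ | ∃ t : ℝ, 0 ≤ t ∧ y = x + t • e} ∩ K :=
    ⟨⟨0, le_refl 0, by simp⟩, hxK⟩
  have : ¬ ({y : ℝ × ℝ | ∃ t : ℝ, 0 ≤ t ∧ y = x + t • e} ∩ K ⊆ {x}) := by
    intro hss
    exact hxv (le_antisymm hss (by simpa [Set.singleton_subset_iff] using hxmem))
  rw [Set.not_subset] at this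
  obtain ⟨y, ⟨⟨t, ht0, hyt⟩, hyK⟩, hyx⟩ := this
  simp only [Set.mem_singleton_iff] at hyx
  have htpos : 0 < t := by
    rcases eq_or_lt_of_le ht0 with h | h
    · exfalso; apply hyx; rw [hyt, ← h]; simp
    · exact h
  refine ⟨(x, y), ⟨hxK, hyK⟩, ?_⟩
  have hyx' : y - x = t • e := by rw [hyt]; abel_nf
  have h1 : (y - x).1 = t * e.1 := by rw [hyx']; rfl
  have h2 : (y - x).2 = t * e.2 := by rw [hyx']; rfl
  have hsq : (y.1 - x.1) ^ 2 + (y.2 - x.2) ^ 2 = t ^ 2 := by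
    have e1 : y.1 - x.1 = t * e.1 := h1
    have e2 : y.2 - x.2 = t * e.2 := h2
    rw [e1, e2]
    nlinarith [hunit]
  have hsqrt : Real.sqrt ((y.1 - x.1) ^ 2 + (y.2 - x.2) ^ 2) = t := by
    rw [hsq, Real.sqrt_sq htpos.le]
  rw [dirOf]
  simp only
  rw [hsqrt, hyx', smul_smul, inv_mul_cancel₀ (ne_of_gt htpos), one_smul]

lemma exists_angle {a b : ℝ} (h : a ^ 2 + b ^ 2 = 1) :
    ∃ θ : ℝ, Real.cos θ = a ∧ Real.sin θ = b := by
  have ha1 : -1 ≤ a := by nlinarith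
  have ha2 : a ≤ 1 := by nlinarith
  have hb : Real.sqrt (1 - a ^ 2) = |b| := by
    rw [show 1 - a ^ 2 = b ^ 2 by linarith, Real.sqrt_sq_eq_abs]
  rcases le_or_gt 0 b with hb0 | hb0
  · exact ⟨Real.arccos a, Real.cos_arccos ha1 ha2, by rw [Real.sin_arccos, hb, abs_of_nonneg hb0]⟩
  · refine ⟨-Real.arccos a, ?_, ?_⟩
    · rw [Real.cos_neg]; exact Real.cos_arccos ha1 ha2
    · rw [Real.sin_neg, Real.sin_arccos, hb, abs_of_neg hb0]; ring

lemma angle_fiber_countable {e : ℝ × ℝ} (h : e.1 ^ 2 + e.2 ^ 2 = 1) :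
    {θ : ℝ | Real.cos θ = e.1 ∧ Real.sin θ = e.2}.Countable := by
  obtain ⟨θ₀, hc, hs⟩ := exists_angle h
  apply Set.Countable.mono ?_ (Set.countable_range fun k : ℤ => θ₀ + k * (2 * Real.pi))
  rintro θ ⟨h1, h2⟩
  have : Real.cos (θ - θ₀) = 1 := by
    rw [Real.cos_sub, h1, h2, hc, hs]; nlinarith [h]
  obtain ⟨k, hk⟩ := (Real.cos_eq_one_iff _).mp this
  exact ⟨k, by simp only []; linarith⟩

lemma assouadDim_prod_harmSet : assouadDim (harmSet ×ˢ harmSet) = 2 := by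
  have hmem2 : (2:ℝ) ∈ {s : ℝ | ∃ C : ℝ, 0 < C ∧ ∀ x ∈ harmSet ×ˢ harmSet, ∀ r R : ℝ,
      0 < r → r < R → ∃ F : Finset (ℝ × ℝ),
      ((harmSet ×ˢ harmSet) ∩ Metric.ball x R ⊆ ⋃ y ∈ F, Metric.ball y r) ∧
      (F.card : ℝ) ≤ C * (R / r) ^ s} :=
    ⟨36, by norm_num, grid_cover _⟩
  rw [assouadDim]
  apply le_antisymm
  · exact csInf_le ⟨2, fun s hs => by obtain ⟨C, hC, h⟩ := hs; exact two_le_of_mem hC h⟩ hmem2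
  · apply le_csInf ⟨2, hmem2⟩
    rintro s ⟨C, hC, h⟩
    exact two_le_of_mem hC h

/-- There is a compact planar set whose visible part has Assouad dimension `2` in almost
every direction: `K = A × A` works, since `Visᵉ K = K` off a countable set of directions
and `dim_A K = 2`. -/
theorem exists_compact_visiblePart_assouad_two :
    ∃ K : Set (ℝ × ℝ), K = harmSet ×ˢ harmSet ∧ IsCompact K ∧
      {e : ℝ × ℝ | e.1 ^ 2 + e.2 ^ 2 = 1 ∧ visiblePart K e ≠ K}.Countable ∧
      assouadDim K = 2 ∧
      ∀ᵐ θ : ℝ, assouadDim (visiblePart K (Real.cos θ, Real.sin θ)) = 2 := by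
  set K : Set (ℝ × ℝ) := harmSet ×ˢ harmSet with hK
  have hKc : K.Countable := harmSet_countable.prod harmSet_countable
  have hbadc : {e : ℝ × ℝ | e.1 ^ 2 + e.2 ^ 2 = 1 ∧ visiblePart K e ≠ K}.Countable :=
    ((hKc.prod hKc).image dirOf).mono (bad_subset K)
  refine ⟨K, rfl, harmSet_compact.prod harmSet_compact, hbadc, assouadDim_prod_harmSet, ?_⟩
  have hBc : {θ : ℝ | visiblePart K (Real.cos θ, Real.sin θ) ≠ K}.Countable := by
    apply Set.Countable.mono ?_ (hbadc.biUnion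
      (fun e he => angle_fiber_countable he.1))
    intro θ hθ
    have hmem : ((Real.cos θ, Real.sin θ) : ℝ × ℝ) ∈
        {e : ℝ × ℝ | e.1 ^ 2 + e.2 ^ 2 = 1 ∧ visiblePart K e ≠ K} :=
      ⟨Real.cos_sq_add_sin_sq θ, hθ⟩
    exact Set.mem_biUnion hmem ⟨rfl, rfl⟩
  rw [MeasureTheory.ae_iff]
  apply measure_mono_null ?_ (hBc.measure_zero _)
  intro θ hθ
  simp only [Set.mem_setOf_eq] at hθ ⊢
  intro hvis
  exact hθ (by rw [hvis]; exact assouadDim_prod_harmSet)
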